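/- For integers X and m ≥ 1, Σ_{j=0}^m (X - 2j)·C(X,j)·C(2m-X, m-j) = 0, where C(a,b) denotes the (generalized) binomial coefficient a(a-1)···(a-b+1)/b!. Equivalently, X·(C(2m,m) - 2·C(2m-1,m-1)) = 0. -/

import Mathlib

open Finset

def genChoose (a : ℚ) (b : ℕ) : ℚ := (∏ i ∈ Finset.range b, (a - i)) / b.factorial

lemma genChoose_zero (a : ℚ) : genChoose a 0 = 1 := by simp [genChoose]

lemma fact_ne (b : ℕ) : ((b.factorial : ℚ)) ≠ 0 := by
  exact_mod_cast b.factorial_ne_zero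

lemma prod_shift (a : ℚ) (b : ℕ) :
    ∏ i ∈ Finset.range (b+1), (a - i) = a * ∏ i ∈ Finset.range b, (a - 1 - i) := by
  rw [Finset.prod_range_succ' (fun i => a - (i:ℚ)) b]
  simp only [Nat.cast_zero, sub_zero]
  rw [mul_comm]
  congr 1
  apply Finset.prod_congr rfl
  intro i _
  push_cast
  ring

lemma genChoose_succ (a : ℚ) (b : ℕ) :
    genChoose a (b+1) = genChoose a b * (a - b) / (b+1) := by
  simp only [genChoose, Finset.prod_range_succ, Nat.factorial_succ]
  push_cast
  rw [div_mul_eq_mul_div, div_div]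
  ring

lemma genChoose_pascal (x : ℚ) (j : ℕ) :
    genChoose (x+1) (j+1) = genChoose x (j+1) + genChoose x j := by
  have h1 : ∏ i ∈ Finset.range (j+1), (x + 1 - i) = (x+1) * ∏ i ∈ Finset.range j, (x - i) := by
    have := prod_shift (x+1) j
    simpa using this
  simp only [genChoose, Finset.prod_range_succ, h1, Nat.factorial_succ]
  push_cast
  have hf := fact_ne j
  have hj1 : ((j:ℚ)+1) ≠ 0 := by positivity
  field_simp
  ring

lemma genChoose_zero_left (j : ℕ) : genChoose 0 (j+1) = 0 := by
  simp only [genChoose]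
  rw [Finset.prod_eq_zero (Finset.mem_range.mpr (Nat.succ_pos j)) (by simp)]
  simp

lemma G_step (c x : ℚ) (m : ℕ) :
    ∑ j ∈ Finset.range (m+1), genChoose (x+1) j * genChoose (c - (x+1)) (m - j)
  = ∑ j ∈ Finset.range (m+1), genChoose x j * genChoose (c - x) (m - j) := by
  have hc : c - (x+1) = (c - x - 1) := by ring
  rw [Finset.sum_range_succ' (fun j => genChoose (x+1) j * genChoose (c - (x+1)) (m - j)) m,
      Finset.sum_range_succ (fun j => genChoose x j * genChoose (c - x) (m - j)) m]
  have h1 : ∀ j ∈ Finset.range m,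
      genChoose (x+1) (j+1) * genChoose (c-(x+1)) (m-(j+1))
      = genChoose x (j+1) * genChoose (c-x-1) (m-(j+1))
        + genChoose x j * genChoose (c-x-1) (m-(j+1)) := by
    intro j hj
    rw [hc, genChoose_pascal]
    ring
  have h2 : ∀ j ∈ Finset.range m,
      genChoose x j * genChoose (c-x) (m-j)
      = genChoose x j * genChoose (c-x-1) (m-j)
        + genChoose x j * genChoose (c-x-1) (m-(j+1)) := by
    intro j hj
    have hjm : j < m := Finset.mem_range.mp hj
    have hms : m - j = (m - (j+1)) + 1 := by omega
    have hcx : c - x = (c - x - 1) + 1 := by ring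
    rw [hms, hcx, genChoose_pascal]
    ring
  rw [Finset.sum_congr rfl h1, Finset.sum_congr rfl h2, Finset.sum_add_distrib,
      Finset.sum_add_distrib]
  have e1 : (∑ j ∈ Finset.range m, genChoose x (j+1) * genChoose (c-x-1) (m-(j+1)))
      + genChoose (c-x-1) m
      = ∑ j ∈ Finset.range (m+1), genChoose x j * genChoose (c-x-1) (m-j) := by
    rw [Finset.sum_range_succ' (fun j => genChoose x j * genChoose (c-x-1) (m-j)) m]
    simp [genChoose_zero]
  have e2 : (∑ j ∈ Finset.range m, genChoose x j * genChoose (c-x-1) (m-j))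
      + genChoose x m
      = ∑ j ∈ Finset.range (m+1), genChoose x j * genChoose (c-x-1) (m-j) := by
    rw [Finset.sum_range_succ (fun j => genChoose x j * genChoose (c-x-1) (m-j)) m]
    simp [genChoose_zero]
  have hx0 : genChoose (x+1) 0 = 1 := genChoose_zero _
  have hcx0 : genChoose (c-x) 0 = 1 := genChoose_zero _
  simp only [Nat.sub_zero, Nat.sub_self, hx0, hcx0, hc]
  linarith [e1, e2]

lemma G_int (c : ℚ) (m : ℕ) (x : ℤ) :
    ∑ j ∈ Finset.range (m+1), genChoose (x:ℚ) j * genChoose (c - x) (m-j) = genChoose c m := by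
  induction x using Int.induction_on with
  | zero =>
    simp only [Int.cast_zero]
    rw [Finset.sum_range_succ' (fun j => genChoose (0:ℚ) j * genChoose (c - 0) (m-j)) m]
    simp [genChoose_zero_left, genChoose_zero]
  | succ k ih =>
    have h := G_step c (k:ℚ) m
    push_cast
    rw [h]
    exact_mod_cast ih
  | pred k ih =>
    have h := G_step c (-(k:ℚ)-1) m
    have e : (-(k:ℚ)-1) + 1 = -(k:ℚ) := by ring
    rw [e] at h
    push_cast at ih ⊢
    rw [h] at ih
    exact ih

lemma absorb1 (a : ℚ) (j : ℕ) : (a - j) * genChoose a j = a * genChoose (a-1) j := by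
  have h := prod_shift a j
  rw [Finset.prod_range_succ] at h
  simp only [genChoose]
  have hf := fact_ne j
  field_simp
  linear_combination h

lemma absorb2 (a : ℚ) (j : ℕ) : ((j:ℚ)+1) * genChoose a (j+1) = a * genChoose (a-1) j := by
  have h := prod_shift a j
  simp only [genChoose, Nat.factorial_succ, h]
  push_cast
  have hf := fact_ne j
  have hj1 : ((j:ℚ)+1) ≠ 0 := by positivity
  field_simp

lemma genChoose_natCast (n k : ℕ) : genChoose (n:ℚ) k = n.choose k := by
  induction k with
  | zero => simp [genChoose_zero]
  | succ k ih =>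
    rw [genChoose_succ, ih]
    rcases le_or_gt (k+1) n with h | h
    · have hrec := Nat.choose_succ_right_eq n k
      have hsub : ((n - k : ℕ) : ℚ) = (n:ℚ) - k := by
        have hkn : k ≤ n := by omega
        push_cast [hkn]
        ring
      have hcast : (n.choose (k+1) : ℚ) * ((k:ℚ)+1) = (n.choose k : ℚ) * ((n:ℚ) - k) := by
        rw [← hsub]
        exact_mod_cast congrArg (fun t : ℕ => (t:ℚ)) hrec
      have hk1 : ((k:ℚ)+1) ≠ 0 := by positivity
      field_simp
      linarith [hcast]
    · rcases (Nat.lt_succ_iff.mp h).lt_or_eq with h2 | h2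
      · rw [Nat.choose_eq_zero_of_lt h2, Nat.choose_eq_zero_of_lt (Nat.lt_succ_of_lt h2)]
        simp
      · rw [h2, Nat.choose_succ_self]
        simp

theorem statement8 (X : ℤ) (m : ℕ) (hm : 1 ≤ m) :
    ∑ j ∈ Finset.range (m + 1),
      ((X : ℚ) - 2 * (j : ℚ)) * genChoose (X : ℚ) j * genChoose (2 * (m : ℚ) - (X : ℚ)) (m - j)
      = 0 := by
  set x : ℚ := (X:ℚ) with hx
  have hc : ∀ j ∈ Finset.range (m+1),
      (x - 2*(j:ℚ)) * genChoose x j * genChoose (2*(m:ℚ) - x) (m - j)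
      = x * (genChoose (x-1) j * genChoose (2*(m:ℚ) - x) (m-j))
        - (j:ℚ) * (genChoose x j * genChoose (2*(m:ℚ) - x) (m-j)) := by
    intro j hj
    have h1 := absorb1 x j
    linear_combination genChoose (2*(m:ℚ) - x) (m-j) * h1
  rw [Finset.sum_congr rfl hc, Finset.sum_sub_distrib, ← Finset.mul_sum]
  have e1 : ((X - 1 : ℤ) : ℚ) = x - 1 := by push_cast; ring
  have e2 : (2*(m:ℚ)-1) - ((X-1:ℤ):ℚ) = 2*(m:ℚ) - x := by push_cast; ring
  have hS1 : ∑ j ∈ Finset.range (m+1), genChoose (x-1) j * genChoose (2*(m:ℚ)-x) (m-j)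
      = genChoose (2*(m:ℚ)-1) m := by
    have h := G_int (2*(m:ℚ)-1) m (X-1)
    rw [e2] at h
    rw [e1] at h
    exact h
  have hS2 : ∑ j ∈ Finset.range (m+1), (j:ℚ) * (genChoose x j * genChoose (2*(m:ℚ)-x) (m-j))
      = x * genChoose (2*(m:ℚ)-1) (m-1) := by
    rw [Finset.sum_range_succ'
      (fun j => (j:ℚ) * (genChoose x j * genChoose (2*(m:ℚ)-x) (m-j))) m]
    simp only [Nat.cast_zero, zero_mul, add_zero]
    have step : ∀ j ∈ Finset.range m,
        (((j+1:ℕ)):ℚ) * (genChoose x (j+1) * genChoose (2*(m:ℚ)-x) (m-(j+1)))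
        = x * (genChoose (x-1) j * genChoose (2*(m:ℚ)-x) ((m-1)-j)) := by
      intro j hj
      have hjm := Finset.mem_range.mp hj
      have hsub : m - (j+1) = (m-1) - j := by omega
      have h2 := absorb2 x j
      push_cast
      rw [hsub]
      linear_combination genChoose (2*(m:ℚ)-x) ((m-1)-j) * h2
    rw [Finset.sum_congr rfl step, ← Finset.mul_sum]
    congr 1
    have h := G_int (2*(m:ℚ)-1) (m-1) (X-1)
    rw [e2] at h
    rw [e1] at h
    have hr : Finset.range m = Finset.range ((m-1)+1) := by
      congr 1
      omega
    rw [hr]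
    exact h
  rw [hS1, hS2]
  have hnat : genChoose (2*(m:ℚ)-1) m = genChoose (2*(m:ℚ)-1) (m-1) := by
    have h1 : (1:ℕ) ≤ 2*m := by omega
    have e : (2*(m:ℚ)-1) = ((2*m-1 : ℕ):ℚ) := by
      rw [Nat.cast_sub h1]
      push_cast
      ring
    rw [e, genChoose_natCast, genChoose_natCast]
    have hmm : (2*m-1) - m = m - 1 := by omega
    rw [← hmm, Nat.choose_symm (by omega)]
  rw [hnat]
  ring
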